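/- Let 0 < p < 1, let n, k, t be nonnegative integers, and let A and B be k-element subsets of {1,…,n} with |A ∩ B| = ℓ. Then in the random graph G(n,p), Pr( both A and B are t-dependent ) ≤ (1−p)^{−ℓ(ℓ−1)/2} · Pr( A is t-dependent ) · Pr( B is t-dependent ). -/

import Mathlib

open MeasureTheory Filter
open scoped ENNReal NNReal

/-- The Bernoulli(p) measure on `Bool`. -/
noncomputable def bernoulliBool (p : ℝ) : Measure Bool :=
  p.toNNReal • Measure.dirac true + (1 - p).toNNReal • Measure.dirac false

instance (p : ℝ) : IsFiniteMeasure (bernoulliBool p) := by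
  unfold bernoulliBool; infer_instance

instance (n : ℕ) : MeasurableSpace (SimpleGraph (Fin n)) := ⊤

/-- The Erdős–Rényi random graph `G(n,p)`: the distribution of the simple graph on `Fin n`
obtained by including each possible edge independently with probability `p`. -/
noncomputable def erMeasure (n : ℕ) (p : ℝ) : Measure (SimpleGraph (Fin n)) :=
  Measure.map (fun f : Sym2 (Fin n) → Bool => SimpleGraph.fromEdgeSet {e | f e = true})
    (Measure.pi fun _ : Sym2 (Fin n) => bernoulliBool p)

/-- A set `S` of vertices is `t`-dependent if the induced subgraph has maximum degree at most `t`,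
i.e. every vertex of `S` has at most `t` neighbours inside `S`. -/
def IsTDependent {V : Type*} (G : SimpleGraph V) (t : ℕ) (S : Set V) : Prop :=
  ∀ v ∈ S, {u ∈ S | G.Adj v u}.ncard ≤ t

/-- The `t`-improper chromatic number: the least number of colours in a vertex colouring
in which every colour class is `t`-dependent. -/
noncomputable def improperChromaticNumber {V : Type*} (G : SimpleGraph V) (t : ℕ) : ℕ :=
  sInf {k | ∃ c : V → Fin k, ∀ i : Fin k, IsTDependent G t {v | c v = i}}

/-- The `t`-dependence number: the maximum size of a `t`-dependent set. -/
noncomputable def tDependenceNumber {V : Type*} (G : SimpleGraph V) (t : ℕ) : ℕ :=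
  sSup {m | ∃ S : Set V, S.ncard = m ∧ IsTDependent G t S}

/-- The Fenchel–Legendre transform `Λ*(x) = x ln(x/p) + (1-x) ln((1-x)/(1-p))`
(with the conventions `Λ*(0) = ln(1/(1-p))`, `Λ*(1) = ln(1/p)`, which hold automatically
since `Real.log 0 = 0` in Lean). -/
noncomputable def LambdaStar (p x : ℝ) : ℝ :=
  x * Real.log (x / p) + (1 - x) * Real.log ((1 - x) / (1 - p))

/-! ### Auxiliary material for `stmt19` -/

/-- The graph built from a boolean edge-indicator. -/
def erGraph (n : ℕ) (f : Sym2 (Fin n) → Bool) : SimpleGraph (Fin n) :=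
  SimpleGraph.fromEdgeSet {e | f e = true}

lemma erGraph_adj {n : ℕ} (f : Sym2 (Fin n) → Bool) (v u : Fin n) :
    (erGraph n f).Adj v u ↔ f s(v, u) = true ∧ v ≠ u := by
  simp [erGraph, SimpleGraph.fromEdgeSet_adj]

/-- `t`-dependence of `S` only depends on the indicator on non-diagonal pairs inside `S`. -/
lemma tdep_congr {n : ℕ} (t : ℕ) (S : Finset (Fin n)) (f g : Sym2 (Fin n) → Bool)
    (h : ∀ v ∈ S, ∀ u ∈ S, v ≠ u → f s(v, u) = g s(v, u)) :
    IsTDependent (erGraph n f) t ↑S ↔ IsTDependent (erGraph n g) t ↑S := by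
  unfold IsTDependent
  refine forall₂_congr fun v hv => ?_
  have hset : {u ∈ (↑S : Set (Fin n)) | (erGraph n f).Adj v u}
      = {u ∈ (↑S : Set (Fin n)) | (erGraph n g).Adj v u} := by
    ext u
    simp only [Set.mem_setOf_eq, Finset.mem_coe, erGraph_adj]
    constructor
    · rintro ⟨hu, hfe, hne⟩
      exact ⟨hu, (h v hv u hu hne) ▸ hfe, hne⟩
    · rintro ⟨hu, hge, hne⟩
      exact ⟨hu, (h v hv u hu hne) ▸ hge, hne⟩
  rw [hset]

/-- `t`-dependence is preserved by deleting edges. -/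
lemma tdep_mono {n : ℕ} (t : ℕ) (S : Finset (Fin n)) (f g : Sym2 (Fin n) → Bool)
    (h : ∀ e, f e = true → g e = true) :
    IsTDependent (erGraph n g) t ↑S → IsTDependent (erGraph n f) t ↑S := by
  intro H v hv
  refine le_trans (Set.ncard_le_ncard ?_ ?_) (H v hv)
  · rintro u ⟨hu, hadj⟩
    rw [erGraph_adj] at hadj
    refine ⟨hu, ?_⟩
    rw [erGraph_adj]
    exact ⟨h _ hadj.1, hadj.2⟩
  · exact S.finite_toSet.subset (Set.sep_subset _ _)

/-- Independence of events depending on disjoint coordinate sets, for a product measure. -/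
lemma pi_indep {ι : Type*} [Fintype ι] (μ0 : Measure Bool) [IsProbabilityMeasure μ0]
    (q : ι → Prop) [DecidablePred q] (E F : Set (ι → Bool))
    (hE : ∀ f g : ι → Bool, (∀ i, q i → f i = g i) → f ∈ E → g ∈ E)
    (hF : ∀ f g : ι → Bool, (∀ i, ¬ q i → f i = g i) → f ∈ F → g ∈ F) :
    (Measure.pi fun _ : ι => μ0) (E ∩ F) =
      (Measure.pi fun _ : ι => μ0) E * (Measure.pi fun _ : ι => μ0) F := by
  classical
  set μ := Measure.pi fun _ : ι => μ0 with hμ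
  set μ1 := Measure.pi fun _ : Subtype q => μ0 with hμ1
  set μ2 := Measure.pi fun _ : {i // ¬ q i} => μ0 with hμ2
  set eqv := MeasurableEquiv.piEquivPiSubtypeProd (fun _ : ι => Bool) q with heqv
  have key : ∀ X : Set ((∀ _ : Subtype q, Bool) × (∀ _ : {i // ¬ q i}, Bool)),
      μ (eqv ⁻¹' X) = (μ1.prod μ2) X := fun X =>
    (measurePreserving_piEquivPiSubtypeProd (fun _ : ι => μ0) q).measure_preimage_equiv X
  set E' : Set (∀ _ : Subtype q, Bool) :=
    {h | (fun i => if hq : q i then h ⟨i, hq⟩ else false) ∈ E} with hE'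
  set F' : Set (∀ _ : {i // ¬ q i}, Bool) :=
    {h | (fun i => if hq : q i then false else h ⟨i, hq⟩) ∈ F} with hF'
  have hEmem : ∀ f : ι → Bool, f ∈ E ↔ (fun i : Subtype q => f i) ∈ E' := by
    intro f
    constructor
    · intro hf
      exact hE f _ (fun i hi => by simp [hi]) hf
    · intro hf
      exact hE _ f (fun i hi => by simp [hi]) hf
  have hFmem : ∀ f : ι → Bool, f ∈ F ↔ (fun i : {i // ¬ q i} => f i) ∈ F' := by
    intro f
    constructor
    · intro hf
      exact hF f _ (fun i hi => by simp [hi]) hf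
    · intro hf
      exact hF _ f (fun i hi => by simp [hi]) hf
  have h1 : E ∩ F = eqv ⁻¹' (E' ×ˢ F') := by
    ext f
    simp only [Set.mem_inter_iff, Set.mem_preimage, Set.mem_prod]
    rw [hEmem f, hFmem f]
    exact Iff.rfl
  have h2 : E = eqv ⁻¹' (E' ×ˢ Set.univ) := by
    ext f
    simp only [Set.mem_preimage, Set.mem_prod, Set.mem_univ, and_true]
    exact hEmem f
  have h3 : F = eqv ⁻¹' (Set.univ ×ˢ F') := by
    ext f
    simp only [Set.mem_preimage, Set.mem_prod, Set.mem_univ, true_and]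
    exact hFmem f
  rw [h1, h2, h3, key, key, key, Measure.prod_prod, Measure.prod_prod]
  simp [measure_univ]

/-- The probability that all coordinates satisfying `q` are `false`. -/
lemma pi_allfalse {ι : Type*} [Fintype ι] (μ0 : Measure Bool)
    [IsProbabilityMeasure μ0] (q : ι → Prop) [DecidablePred q] :
    (Measure.pi fun _ : ι => μ0) {f | ∀ i, q i → f i = false}
      = μ0 {false} ^ Nat.card (Subtype q) := by
  classical
  set eqv := MeasurableEquiv.piEquivPiSubtypeProd (fun _ : ι => Bool) q with heqv
  have h1 : {f : ι → Bool | ∀ i, q i → f i = false}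
      = eqv ⁻¹' ((Set.univ.pi fun _ : Subtype q => {false}) ×ˢ Set.univ) := by
    ext f
    simp only [Set.mem_preimage, Set.mem_prod, Set.mem_univ, and_true, Set.mem_pi,
      Set.mem_singleton_iff, Set.mem_setOf_eq]
    constructor
    · intro h i _
      exact h i.1 i.2
    · intro h i hi
      exact h ⟨i, hi⟩ trivial
  rw [h1,
    (measurePreserving_piEquivPiSubtypeProd (fun _ : ι => μ0) q).measure_preimage_equiv,
    Measure.prod_prod, measure_univ, mul_one, Measure.pi_pi]
  rw [Finset.prod_const, Finset.card_univ, Nat.card_eq_fintype_card]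

/-- The number of non-diagonal unordered pairs inside a finset of size `ℓ` is `C(ℓ,2)`. -/
lemma card_sym2_nondiag {α : Type*} [DecidableEq α] (s : Finset α) :
    (s.sym2.filter fun e => ¬ e.IsDiag).card = s.card.choose 2 := by
  classical
  have hdiag : (s.sym2.filter fun e => e.IsDiag) = s.image Sym2.diag := by
    ext e
    simp only [Finset.mem_filter, Finset.mem_image, Finset.mem_sym2_iff]
    constructor
    · rintro ⟨hm, hd⟩
      obtain ⟨a, rfl⟩ : ∃ a, Sym2.diag a = e := ⟨_, Sym2.diag_diagElem hd⟩
      exact ⟨a, hm a (by simp [Sym2.diag]), rfl⟩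
    · rintro ⟨a, ha, rfl⟩
      refine ⟨fun b hb => ?_, Sym2.diag_isDiag a⟩
      simp only [Sym2.diag, Sym2.mem_iff] at hb
      rcases hb with rfl | rfl <;> exact ha
  have hcard : (s.sym2.filter fun e => e.IsDiag).card = s.card := by
    rw [hdiag, Finset.card_image_of_injective _ Sym2.diag_injective]
  have hsum := Finset.card_filter_add_card_filter_not
    (s := s.sym2) (p := fun e => e.IsDiag)
  rw [hcard, Finset.card_sym2] at hsum
  have hchoose : (s.card + 1).choose 2 = s.card + s.card.choose 2 := by
    rw [Nat.choose_succ_succ, Nat.choose_one_right]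
  omega

theorem stmt19 (p : ℝ) (hp0 : 0 < p) (hp1 : p < 1) (n k t ℓ : ℕ)
    (A B : Finset (Fin n)) (hA : A.card = k) (hB : B.card = k) (hAB : (A ∩ B).card = ℓ) :
    erMeasure n p {G | IsTDependent G t ↑A ∧ IsTDependent G t ↑B}
      ≤ ENNReal.ofReal (((1 - p) ^ ℓ.choose 2)⁻¹) *
          (erMeasure n p {G | IsTDependent G t ↑A} * erMeasure n p {G | IsTDependent G t ↑B}) := by
  classical
  subst hAB
  have h1p : (0:ℝ) < 1 - p := by linarith
  set μ0 := bernoulliBool p with hμ0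
  haveI : IsProbabilityMeasure μ0 := by
    constructor
    simp only [hμ0, bernoulliBool, Measure.add_apply, Measure.smul_apply,
      Measure.dirac_apply' _ MeasurableSet.univ, Set.indicator_univ, Pi.one_apply,
      ENNReal.smul_def, smul_eq_mul, mul_one]
    rw [show ((p.toNNReal : ℝ≥0∞)) = ENNReal.ofReal p from rfl,
      show (((1 - p).toNNReal : ℝ≥0∞)) = ENNReal.ofReal (1 - p) from rfl,
      ← ENNReal.ofReal_add hp0.le h1p.le]
    norm_num
  set μ := Measure.pi fun _ : Sym2 (Fin n) => μ0 with hμ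
  have hermap : erMeasure n p = Measure.map (erGraph n) μ := rfl
  have happ : ∀ S : Set (SimpleGraph (Fin n)),
      erMeasure n p S = μ (erGraph n ⁻¹' S) := by
    intro S
    rw [hermap, Measure.map_apply (measurable_of_countable _) (by trivial)]
  -- the three events, upstairs
  set EA : Set (Sym2 (Fin n) → Bool) := erGraph n ⁻¹' {G | IsTDependent G t ↑A} with hEA
  set EB : Set (Sym2 (Fin n) → Bool) := erGraph n ⁻¹' {G | IsTDependent G t ↑B} with hEB
  -- zero out all pairs inside A ∩ B
  set φ : (Sym2 (Fin n) → Bool) → (Sym2 (Fin n) → Bool) :=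
    fun f e => if e ∈ (A ∩ B).sym2 then false else f e with hφ
  set F : Set (Sym2 (Fin n) → Bool) := φ ⁻¹' EB with hF
  set D : Finset (Sym2 (Fin n)) := (A ∩ B).sym2.filter fun e => ¬ e.IsDiag with hD
  have hDcard : D.card = ((A ∩ B).card).choose 2 := card_sym2_nondiag _
  -- Step 1: E_A ∩ E_B ⊆ E_A ∩ F
  have step1 : EA ∩ EB ⊆ EA ∩ F := by
    rintro f ⟨hfA, hfB⟩
    refine ⟨hfA, ?_⟩
    simp only [hF, Set.mem_preimage]
    refine tdep_mono t B (φ f) f ?_ hfB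
    intro e he
    simp only [hφ] at he
    by_cases hmem : e ∈ (A ∩ B).sym2
    · rw [if_pos hmem] at he; exact absurd he (by simp)
    · rwa [if_neg hmem] at he
  -- Step 2: independence of E_A and F
  have step2 : μ (EA ∩ F) = μ EA * μ F := by
    refine pi_indep μ0 (fun e => e ∈ A.sym2) EA F ?_ ?_
    · intro f g hfg hf
      simp only [hEA, Set.mem_preimage, Set.mem_setOf_eq] at hf ⊢
      refine (tdep_congr t A g f ?_).2 hf
      intro v hv u hu _
      exact (hfg _ (Finset.mk_mem_sym2_iff.2 ⟨hv, hu⟩)).symm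
    · intro f g hfg hf
      simp only [hF, hEB, Set.mem_preimage, Set.mem_setOf_eq] at hf ⊢
      refine (tdep_congr t B (φ g) (φ f) ?_).2 hf
      intro v hv u hu _
      show (if s(v, u) ∈ (A ∩ B).sym2 then false else g s(v, u))
        = (if s(v, u) ∈ (A ∩ B).sym2 then false else f s(v, u))
      by_cases hmem : s(v, u) ∈ (A ∩ B).sym2
      · rw [if_pos hmem, if_pos hmem]
      · have hAn : s(v, u) ∉ A.sym2 := by
          intro hAmem
          rw [Finset.mk_mem_sym2_iff] at hAmem
          exact hmem (Finset.mk_mem_sym2_iff.2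
            ⟨Finset.mem_inter.2 ⟨hAmem.1, hv⟩, Finset.mem_inter.2 ⟨hAmem.2, hu⟩⟩)
        rw [if_neg hmem, if_neg hmem, hfg _ hAn]
  -- Step 3: μ(F ∩ allfalse) ≤ μ EB, and it factorizes
  have step3a : F ∩ {f | ∀ e ∈ D, f e = false} ⊆ EB := by
    rintro f ⟨hfF, hfall⟩
    simp only [hF, hEB, Set.mem_preimage, Set.mem_setOf_eq] at hfF ⊢
    refine (tdep_congr t B f (φ f) ?_).2 hfF
    intro v hv u hu hne
    show f s(v, u) = (if s(v, u) ∈ (A ∩ B).sym2 then false else f s(v, u))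
    by_cases hmem : s(v, u) ∈ (A ∩ B).sym2
    · have hnd : ¬ (s(v, u) : Sym2 (Fin n)).IsDiag := by
        rw [Sym2.mk_isDiag_iff]; exact hne
      have hfe : f s(v, u) = false := hfall _ (Finset.mem_filter.2 ⟨hmem, hnd⟩)
      rw [if_pos hmem, hfe]
    · rw [if_neg hmem]
  have step3b : μ (F ∩ {f | ∀ e ∈ D, f e = false}) = μ F * μ {f | ∀ e ∈ D, f e = false} := by
    refine pi_indep μ0 (fun e => e ∉ D) F _ ?_ ?_
    · intro f g hfg hf
      simp only [hF, Set.mem_preimage] at hf ⊢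
      have hφeq : φ f = φ g := by
        funext e
        show (if e ∈ (A ∩ B).sym2 then false else f e)
          = (if e ∈ (A ∩ B).sym2 then false else g e)
        by_cases hmem : e ∈ (A ∩ B).sym2
        · rw [if_pos hmem, if_pos hmem]
        · have heD : e ∉ D := by
            simp only [hD, Finset.mem_filter]
            tauto
          rw [if_neg hmem, if_neg hmem, hfg e heD]
      rw [← hφeq]
      exact hf
    · intro f g hfg hf e he
      rw [← hfg e (not_not_intro he)]
      exact hf e he
  have hfalse : μ0 {false} = ENNReal.ofReal (1 - p) := by
    simp only [hμ0, bernoulliBool, Measure.add_apply, Measure.smul_apply,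
      ENNReal.smul_def, smul_eq_mul,
      Measure.dirac_apply' _ (MeasurableSet.singleton false)]
    rw [Set.indicator_of_notMem (by simp), Set.indicator_of_mem (by simp) (1 : Bool → ℝ≥0∞)]
    simp [ENNReal.ofReal]
  have hallfalse : μ {f | ∀ e ∈ D, f e = false}
      = ENNReal.ofReal ((1 - p) ^ ((A ∩ B).card).choose 2) := by
    have hcardD : Nat.card {e // e ∈ D} = ((A ∩ B).card).choose 2 := by
      rw [Nat.card_eq_finsetCard, hDcard]
    have := pi_allfalse (ι := Sym2 (Fin n)) μ0 (fun e => e ∈ D)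
    rw [hμ]
    rw [show {f : Sym2 (Fin n) → Bool | ∀ e ∈ D, f e = false}
        = {f : Sym2 (Fin n) → Bool | ∀ e, e ∈ D → f e = false} from rfl, this,
      hfalse, hcardD, ENNReal.ofReal_pow h1p.le]
  set c : ℝ≥0∞ := ENNReal.ofReal ((1 - p) ^ ((A ∩ B).card).choose 2) with hc
  have hcpos : c ≠ 0 := by
    simp [hc, ENNReal.ofReal_eq_zero, not_le, pow_pos h1p]
  have hctop : c ≠ ⊤ := ENNReal.ofReal_ne_top
  have step3 : μ F * c ≤ μ EB := by
    rw [← hallfalse, ← step3b]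
    exact measure_mono step3a
  have hFle : μ F ≤ c⁻¹ * μ EB := by
    calc μ F = c⁻¹ * (μ F * c) := by
          rw [mul_comm (μ F) c, ← mul_assoc, ENNReal.inv_mul_cancel hcpos hctop, one_mul]
      _ ≤ c⁻¹ * μ EB := mul_le_mul_right step3 _
  have hcinv : c⁻¹ = ENNReal.ofReal (((1 - p) ^ ((A ∩ B).card).choose 2)⁻¹) := by
    rw [hc, ← ENNReal.ofReal_inv_of_pos (pow_pos h1p _)]
  calc erMeasure n p {G | IsTDependent G t ↑A ∧ IsTDependent G t ↑B}
      = μ (EA ∩ EB) := by rw [happ]; rfl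
    _ ≤ μ (EA ∩ F) := measure_mono step1
    _ = μ EA * μ F := step2
    _ ≤ μ EA * (c⁻¹ * μ EB) := mul_le_mul_right hFle _
    _ = c⁻¹ * (μ EA * μ EB) := by ring
    _ = ENNReal.ofReal (((1 - p) ^ ((A ∩ B).card).choose 2)⁻¹) *
          (erMeasure n p {G | IsTDependent G t ↑A} * erMeasure n p {G | IsTDependent G t ↑B}) := by
        rw [hcinv, happ, happ]
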